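/- Norm bound (Lemma 5.4): Let p : ℝ^d → ℝ be a multivariate polynomial. Then there exists c ∈ ℓ², where ℓ² is the Hilbert space of square-summable real sequences indexed by multi-indices in ℕ^d, such that p(x) = ⟨c, φ(x)⟩_{ℓ²} for every x ∈ ℝ^d with ‖x‖ ≤ 1, and ‖c‖_{ℓ²} ≤ 2^{deg(p)/2}·‖p‖. -/

import Mathlib

open scoped RealInnerProductSpace ENNReal
open Finset

/-- The norm of a multivariate polynomial: the Euclidean norm of its coefficient vector. -/
noncomputable def polyNorm {d : ℕ} (p : MvPolynomial (Fin d) ℝ) : ℝ :=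
  Real.sqrt (∑ α ∈ p.support, (p.coeff α) ^ 2)

/-- The feature map associated with the rational kernel: the coordinate of `φ(x)` at the
multi-index `α` is `x^α · sqrt(2^{-|α|} · |α|!/(α₁!⋯α_d!))`. -/
noncomputable def phiMap (d : ℕ) (x : EuclideanSpace ℝ (Fin d)) (α : Fin d →₀ ℕ) : ℝ :=
  (∏ i, x i ^ α i) *
    Real.sqrt (((2 : ℝ) ^ (∑ i, α i))⁻¹ * (Nat.multinomial Finset.univ α : ℝ))

lemma summable_geom_pi {r : ℝ} (h0 : 0 ≤ r) (h1 : r < 1) :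
    ∀ d : ℕ, Summable (fun f : Fin d → ℕ => ∏ i, r ^ f i) := by
  intro d
  induction d with
  | zero => exact Summable.of_finite
  | succ n ih =>
    have h := (summable_geometric_of_lt_one h0 h1).mul_of_nonneg ih
      (fun _ => pow_nonneg h0 _) (fun f => Finset.prod_nonneg fun i _ => pow_nonneg h0 _)
    refine ((Fin.consEquiv (fun _ : Fin (n+1) => ℕ)).summable_iff).mp ?_
    convert h using 2 with p
    simp [Fin.prod_univ_succ, Fin.consEquiv]

/-- Norm bound: every multivariate polynomial `p` on `ℝ^d` can be represented on the unit
ball as an inner product `p(x) = ⟪c, φ(x)⟫` with some `c ∈ ℓ²` (indexed by multi-indices)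
of norm at most `2^{deg(p)/2}·‖p‖`. -/
theorem norm_bound (d : ℕ) (p : MvPolynomial (Fin d) ℝ) :
    ∃ c : lp (fun _ : Fin d →₀ ℕ => ℝ) 2,
      ‖c‖ ≤ 2 ^ ((p.totalDegree : ℝ) / 2) * polyNorm p ∧
      ∀ x : EuclideanSpace ℝ (Fin d), ‖x‖ ≤ 1 →
        ∃ hmem : Memℓp (phiMap d x) 2,
          MvPolynomial.eval (fun i => x i) p =
            ⟪c, (⟨phiMap d x, hmem⟩ : lp (fun _ : Fin d →₀ ℕ => ℝ) 2)⟫ := by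
  classical
  set w : (Fin d →₀ ℕ) → ℝ := fun α =>
    Real.sqrt (((2 : ℝ) ^ (∑ i, α i))⁻¹ * (Nat.multinomial Finset.univ α : ℝ)) with hw
  have hargpos : ∀ α : Fin d →₀ ℕ,
      0 < ((2 : ℝ) ^ (∑ i, α i))⁻¹ * (Nat.multinomial Finset.univ α : ℝ) := fun α =>
    mul_pos (inv_pos.mpr (pow_pos two_pos _))
      (by exact_mod_cast Nat.multinomial_pos _ _)
  have hwpos : ∀ α, 0 < w α := fun α => Real.sqrt_pos.mpr (hargpos α)
  have hwsq : ∀ α : Fin d →₀ ℕ,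
      w α ^ 2 = ((2 : ℝ) ^ (∑ i, α i))⁻¹ * (Nat.multinomial Finset.univ α : ℝ) := fun α =>
    Real.sq_sqrt (hargpos α).le
  set cf : (Fin d →₀ ℕ) → ℝ := fun α =>
    if α ∈ p.support then p.coeff α / w α else 0 with hcf
  have hcf0 : ∀ α ∉ p.support, (fun α => ‖cf α‖ ^ (2 : ℝ≥0∞).toReal) α = 0 := by
    intro α hα
    simp only [hcf, if_neg hα, norm_zero]
    rw [Real.zero_rpow (by norm_num)]
  have hcmem : Memℓp cf 2 := memℓp_gen (summable_of_ne_finset_zero hcf0)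
  refine ⟨⟨cf, hcmem⟩, ?_, ?_⟩
  · -- norm bound
    set C := (2 : ℝ) ^ ((p.totalDegree : ℝ) / 2) * polyNorm p with hC
    have hCnn : 0 ≤ C := mul_nonneg (Real.rpow_nonneg (by norm_num) _) (Real.sqrt_nonneg _)
    refine lp.norm_le_of_tsum_le (by norm_num) hCnn ?_
    have hcoe : ∀ α, ((⟨cf, hcmem⟩ : lp (fun _ : Fin d →₀ ℕ => ℝ) 2) : ∀ _, ℝ) α = cf α :=
      fun α => rfl
    have htsum : ∑' α, ‖cf α‖ ^ (2 : ℝ≥0∞).toReal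
        = ∑ α ∈ p.support, ‖cf α‖ ^ (2 : ℝ≥0∞).toReal := tsum_eq_sum hcf0
    have hterm : ∀ α ∈ p.support,
        ‖cf α‖ ^ (2 : ℝ≥0∞).toReal ≤ (2 : ℝ) ^ p.totalDegree * (p.coeff α) ^ 2 := by
      intro α hα
      have h2 : (2 : ℝ≥0∞).toReal = (2 : ℝ) := by norm_num
      rw [h2, Real.rpow_two, Real.norm_eq_abs, sq_abs]
      simp only [hcf]
      rw [if_pos hα, div_pow]
      have hle : (w α ^ 2)⁻¹ ≤ (2 : ℝ) ^ p.totalDegree := by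
        have h1 : ((2 : ℝ) ^ (∑ i, α i))⁻¹ ≤ w α ^ 2 := by
          rw [hwsq α]
          nth_rewrite 1 [← mul_one (((2 : ℝ) ^ (∑ i, α i))⁻¹)]
          gcongr
          exact_mod_cast Nat.multinomial_pos _ _
        have h3 : (w α ^ 2)⁻¹ ≤ (2 : ℝ) ^ (∑ i, α i) := by
          rw [← inv_inv ((2 : ℝ) ^ (∑ i, α i))]
          exact inv_anti₀ (by positivity) h1
        refine h3.trans ?_
        have hdeg : (∑ i, α i) ≤ p.totalDegree := by
          have := MvPolynomial.le_totalDegree (p := p) hα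
          rwa [Finsupp.sum_fintype _ _ (fun _ => rfl)] at this
        exact pow_le_pow_right₀ one_le_two hdeg
      rw [div_eq_mul_inv, mul_comm]
      exact mul_le_mul_of_nonneg_right hle (sq_nonneg _)
    have hsum_le : ∑ α ∈ p.support, ‖cf α‖ ^ (2 : ℝ≥0∞).toReal
        ≤ (2 : ℝ) ^ p.totalDegree * ∑ α ∈ p.support, (p.coeff α) ^ 2 := by
      rw [Finset.mul_sum]
      exact Finset.sum_le_sum hterm
    have hCsq : C ^ (2 : ℝ≥0∞).toReal
        = (2 : ℝ) ^ p.totalDegree * ∑ α ∈ p.support, (p.coeff α) ^ 2 := by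
      have h2 : (2 : ℝ≥0∞).toReal = (2 : ℝ) := by norm_num
      rw [h2, Real.rpow_two, hC, mul_pow, polyNorm,
        Real.sq_sqrt (Finset.sum_nonneg fun _ _ => sq_nonneg _),
        ← Real.rpow_two, ← Real.rpow_mul (by norm_num), div_mul_cancel₀ _ (two_ne_zero),
        Real.rpow_natCast]
    calc ∑' α, ‖cf α‖ ^ (2 : ℝ≥0∞).toReal
        = ∑ α ∈ p.support, ‖cf α‖ ^ (2 : ℝ≥0∞).toReal := htsum
      _ ≤ (2 : ℝ) ^ p.totalDegree * ∑ α ∈ p.support, (p.coeff α) ^ 2 := hsum_le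
      _ = C ^ (2 : ℝ≥0∞).toReal := hCsq.symm
  · -- evaluation
    intro x hx
    have hxsq : ∑ i, x i ^ 2 ≤ 1 := by
      have hnorm : ‖x‖ ^ 2 = ∑ i, x i ^ 2 := by
        rw [EuclideanSpace.norm_eq, Real.sq_sqrt (Finset.sum_nonneg fun _ _ => sq_nonneg _)]
        simp [Real.norm_eq_abs, sq_abs]
      calc ∑ i, x i ^ 2 = ‖x‖ ^ 2 := hnorm.symm
        _ ≤ 1 := by nlinarith [norm_nonneg x]
    have hkey : ∀ α : Fin d →₀ ℕ,
        (Nat.multinomial Finset.univ α : ℝ) * ∏ i, (x i ^ 2) ^ α i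
          ≤ 1 := by
      intro α
      have hmem : (⇑α : Fin d → ℕ) ∈ Finset.piAntidiag Finset.univ (∑ i, α i) := by
        simp [Finset.mem_piAntidiag]
      have hsingle := Finset.single_le_sum
        (f := fun k : Fin d → ℕ => (Nat.multinomial Finset.univ k : ℝ) * ∏ i, (x i ^ 2) ^ k i)
        (fun k _ => mul_nonneg (by positivity) (Finset.prod_nonneg fun i _ => by positivity))
        hmem
      rw [← Finset.sum_pow_eq_sum_piAntidiag Finset.univ (fun i => x i ^ 2) (∑ i, α i)]
        at hsingle
      exact hsingle.trans (pow_le_one₀ (Finset.sum_nonneg fun _ _ => sq_nonneg _) hxsq)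
    have hφsq : ∀ α : Fin d →₀ ℕ,
        ‖phiMap d x α‖ ^ (2 : ℝ≥0∞).toReal ≤ ∏ i, ((2 : ℝ)⁻¹) ^ α i := by
      intro α
      have h2 : (2 : ℝ≥0∞).toReal = (2 : ℝ) := by norm_num
      rw [h2, Real.rpow_two, Real.norm_eq_abs, sq_abs, phiMap, mul_pow, Real.sq_sqrt (hargpos α).le]
      have hprod : (∏ i, x i ^ α i) ^ 2 = ∏ i, (x i ^ 2) ^ α i := by
        rw [← Finset.prod_pow]
        exact Finset.prod_congr rfl fun i _ => by ring
      rw [hprod]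
      have : (∏ i, (x i ^ 2) ^ α i) * (((2 : ℝ) ^ (∑ i, α i))⁻¹ *
          (Nat.multinomial Finset.univ α : ℝ))
          = ((2 : ℝ) ^ (∑ i, α i))⁻¹ *
            ((Nat.multinomial Finset.univ α : ℝ) * ∏ i, (x i ^ 2) ^ α i) := by ring
      rw [this]
      calc ((2 : ℝ) ^ (∑ i, α i))⁻¹ *
            ((Nat.multinomial Finset.univ α : ℝ) * ∏ i, (x i ^ 2) ^ α i)
          ≤ ((2 : ℝ) ^ (∑ i, α i))⁻¹ * 1 :=
            mul_le_mul_of_nonneg_left (hkey α) (by positivity)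
        _ = ∏ i, ((2 : ℝ)⁻¹) ^ α i := by
            rw [mul_one, ← inv_pow, ← Finset.prod_pow_eq_pow_sum]
    have hgsum : Summable (fun α : Fin d →₀ ℕ => ∏ i, ((2 : ℝ)⁻¹) ^ α i) := by
      have := (summable_geom_pi (r := (2:ℝ)⁻¹) (by norm_num) (by norm_num) d)
      exact this.comp_injective Finsupp.equivFunOnFinite.injective
    have hmem : Memℓp (phiMap d x) 2 := memℓp_gen <|
      Summable.of_nonneg_of_le (fun α => Real.rpow_nonneg (norm_nonneg _) _) hφsq hgsum
    refine ⟨hmem, ?_⟩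
    have hinner : ⟪(⟨cf, hcmem⟩ : lp (fun _ : Fin d →₀ ℕ => ℝ) 2),
        (⟨phiMap d x, hmem⟩ : lp (fun _ : Fin d →₀ ℕ => ℝ) 2)⟫
        = ∑' α, cf α * phiMap d x α := by
      rw [lp.inner_eq_tsum]
      simp [RCLike.inner_apply]
      exact tsum_congr fun α => mul_comm _ _
    rw [hinner, tsum_eq_sum (s := p.support)
        (fun α hα => by simp only [hcf, if_neg hα, zero_mul]),
      MvPolynomial.eval_eq']
    refine Finset.sum_congr rfl fun α hα => ?_
    have hwα : Real.sqrt (((2 : ℝ) ^ (∑ i, α i))⁻¹ * (Nat.multinomial Finset.univ α : ℝ))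
        = w α := rfl
    simp only [hcf, if_pos hα, phiMap, hwα]
    field_simp
    rw [mul_div_assoc, div_self (hwpos α).ne', mul_one]
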